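/- Let A, B be symmetric positive-definite n×n matrices and define the curve γ(s) = A^{1/2} (A^{-1/2} B A^{-1/2})^s A^{1/2} for s ∈ [0,1], where the real matrix power is defined spectrally. Then γ(0)=A, γ(1)=B, and for every s ∈ [0,1], ‖γ'(s)‖_{γ(s)} = dist(A,B), where ‖C‖_M = ‖M^{-1/2} C M^{-1/2}‖_HS and dist(A,B) = ‖log(A^{-1/2} B A^{-1/2})‖_HS. In particular the length ∫₀¹ ‖γ'(s)‖_{γ(s)} ds equals dist(A,B). -/

import Mathlib

open Matrix Real

noncomputable def matFun {n : ℕ} (f : ℝ → ℝ) (A : Matrix (Fin n) (Fin n) ℝ) :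
    Matrix (Fin n) (Fin n) ℝ :=
  if hA : A.IsHermitian then
    (hA.eigenvectorUnitary : Matrix (Fin n) (Fin n) ℝ) *
      Matrix.diagonal (fun i => f (hA.eigenvalues i)) *
      (star (hA.eigenvectorUnitary : Matrix (Fin n) (Fin n) ℝ))
  else 0

/-- The logarithm of a positive-definite matrix, defined spectrally. -/
noncomputable def matLog {n : ℕ} (A : Matrix (Fin n) (Fin n) ℝ) :
    Matrix (Fin n) (Fin n) ℝ := matFun Real.log A

/-- The positive square root of a positive-definite matrix, defined spectrally. -/
noncomputable def matSqrt {n : ℕ} (A : Matrix (Fin n) (Fin n) ℝ) :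
    Matrix (Fin n) (Fin n) ℝ := matFun Real.sqrt A

/-- `A^{-1/2}` for a positive-definite matrix, defined spectrally. -/
noncomputable def matSqrtInv {n : ℕ} (A : Matrix (Fin n) (Fin n) ℝ) :
    Matrix (Fin n) (Fin n) ℝ := matFun (fun t => (Real.sqrt t)⁻¹) A

/-- The Hilbert–Schmidt (Frobenius) norm of a real square matrix. -/
noncomputable def hsNorm {n : ℕ} (T : Matrix (Fin n) (Fin n) ℝ) : ℝ :=
  Real.sqrt ((Tᵀ * T).trace)

/-- `dist(A,B) = ‖log (A^{-1/2} B A^{-1/2})‖_HS`. -/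
noncomputable def pdist {n : ℕ} (A B : Matrix (Fin n) (Fin n) ℝ) : ℝ :=
  hsNorm (matLog (matSqrtInv A * B * matSqrtInv A))

namespace auxstmt9

variable {n : ℕ} {P : Matrix (Fin n) (Fin n) ℝ}

lemma matFun_def (hP : P.IsHermitian) (f : ℝ → ℝ) :
    matFun f P = (hP.eigenvectorUnitary : Matrix (Fin n) (Fin n) ℝ) *
      Matrix.diagonal (fun i => f (hP.eigenvalues i)) *
      (star (hP.eigenvectorUnitary : Matrix (Fin n) (Fin n) ℝ)) := dif_pos hP

lemma star_mul_self_eq (hP : P.IsHermitian) :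
    star (hP.eigenvectorUnitary : Matrix (Fin n) (Fin n) ℝ) *
      (hP.eigenvectorUnitary : Matrix (Fin n) (Fin n) ℝ) = 1 :=
  Matrix.mem_unitaryGroup_iff'.mp hP.eigenvectorUnitary.2

lemma mul_star_self_eq (hP : P.IsHermitian) :
    (hP.eigenvectorUnitary : Matrix (Fin n) (Fin n) ℝ) *
      star (hP.eigenvectorUnitary : Matrix (Fin n) (Fin n) ℝ) = 1 :=
  Matrix.mem_unitaryGroup_iff.mp hP.eigenvectorUnitary.2

lemma matFun_mul (hP : P.IsHermitian) (f g : ℝ → ℝ) :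
    matFun f P * matFun g P = matFun (fun t => f t * g t) P := by
  rw [matFun_def hP f, matFun_def hP g, matFun_def hP]
  set U := (hP.eigenvectorUnitary : Matrix (Fin n) (Fin n) ℝ) with hU
  have h1 : star U * U = 1 := star_mul_self_eq hP
  set Df := Matrix.diagonal (fun i => f (hP.eigenvalues i))
  set Dg := Matrix.diagonal (fun i => g (hP.eigenvalues i))
  have : U * Df * star U * (U * Dg * star U) = U * (Df * (star U * U) * Dg) * star U := by
    noncomm_ring
  rw [this, h1, mul_one, Matrix.diagonal_mul_diagonal]

lemma matFun_congr (hP : P.IsHermitian) {f g : ℝ → ℝ}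
    (h : ∀ i, f (hP.eigenvalues i) = g (hP.eigenvalues i)) : matFun f P = matFun g P := by
  rw [matFun_def hP, matFun_def hP, funext h]

lemma matFun_one (hP : P.IsHermitian) : matFun (fun _ => (1 : ℝ)) P = 1 := by
  rw [matFun_def hP]
  have : Matrix.diagonal (fun _ : Fin n => (1:ℝ)) = 1 := Matrix.diagonal_one
  rw [this, mul_one, mul_star_self_eq hP]

lemma matFun_id (hP : P.IsHermitian) : matFun (fun t => t) P = P := by
  rw [matFun_def hP]
  conv_rhs => rw [hP.spectral_theorem]
  congr 2

lemma ct_eq_transpose (X : Matrix (Fin n) (Fin n) ℝ) : Xᴴ = Xᵀ := by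
  ext i j; simp [Matrix.conjTranspose_apply]

lemma matFun_isHermitian (hP : P.IsHermitian) (f : ℝ → ℝ) : (matFun f P).IsHermitian := by
  rw [matFun_def hP]
  unfold Matrix.IsHermitian
  simp [Matrix.conjTranspose_mul, Matrix.diagonal_conjTranspose, Matrix.mul_assoc,
    Matrix.star_eq_conjTranspose]

lemma herm_transpose {X : Matrix (Fin n) (Fin n) ℝ} (h : X.IsHermitian) : Xᵀ = X := by
  rw [← ct_eq_transpose]; exact h

lemma posDef_conj {X Q : Matrix (Fin n) (Fin n) ℝ} (hQ : Q.PosDef) (hX : IsUnit X.det) :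
    (Xᴴ * Q * X).PosDef := by
  exact hQ.conjTranspose_mul_mul_same
    (Matrix.mulVec_injective_iff_isUnit.mpr ((Matrix.isUnit_iff_isUnit_det X).mpr hX))

lemma isUnit_eigenvectorUnitary (hP : P.IsHermitian) :
    IsUnit (hP.eigenvectorUnitary : Matrix (Fin n) (Fin n) ℝ) :=
  ⟨Unitary.toUnits hP.eigenvectorUnitary, rfl⟩

lemma matFun_posDef (hP : P.PosDef) {f : ℝ → ℝ} (hf : ∀ i, 0 < f (hP.1.eigenvalues i)) :
    (matFun f P).PosDef := by
  rw [matFun_def hP.1]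
  set U := (hP.1.eigenvectorUnitary : Matrix (Fin n) (Fin n) ℝ) with hU
  have hDU : U = (star U)ᴴ := by rw [ct_eq_transpose]; ext i j; simp [Matrix.star_apply]
  have hdet : IsUnit (star U).det :=
    (Matrix.isUnit_iff_isUnit_det _).mp (isUnit_eigenvectorUnitary hP.1).star
  have := posDef_conj (Matrix.PosDef.diagonal hf) hdet
  rw [← hDU] at this
  exact this

lemma matFun_trace (hP : P.IsHermitian) (f : ℝ → ℝ) :
    (matFun f P).trace = ∑ i, f (hP.eigenvalues i) := by
  rw [matFun_def hP, Matrix.trace_mul_comm, ← Matrix.mul_assoc, star_mul_self_eq hP, one_mul,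
    Matrix.trace_diagonal]

lemma matFun_inv (hP : P.PosDef) : P⁻¹ = matFun (fun t => t⁻¹) P := by
  apply Matrix.inv_eq_right_inv
  have h := matFun_mul hP.1 (fun t => t) (fun t => t⁻¹)
  rw [matFun_id hP.1] at h
  rw [h, matFun_congr hP.1 (g := fun _ => 1)
    (fun i => mul_inv_cancel₀ (hP.eigenvalues_pos i).ne'), matFun_one hP.1]

lemma hasDerivAt_matFun_entry {M : Matrix (Fin n) (Fin n) ℝ} (hM : M.PosDef) (s : ℝ)
    (p q : Fin n) :
    HasDerivAt (fun t => matFun (fun x => x ^ t) M p q)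
      (matFun (fun x => x ^ s * Real.log x) M p q) s := by
  have hrw : ∀ f : ℝ → ℝ, matFun f M p q =
      ∑ k, (hM.1.eigenvectorUnitary : Matrix (Fin n) (Fin n) ℝ) p k * f (hM.1.eigenvalues k) *
        (hM.1.eigenvectorUnitary : Matrix (Fin n) (Fin n) ℝ) q k := by
    intro f
    rw [matFun_def hM.1]
    simp [Matrix.mul_apply, Matrix.diagonal_apply, Matrix.star_apply, mul_ite, ite_mul,
      mul_zero, zero_mul, Finset.sum_ite_eq, Finset.sum_ite_eq']
  simp only [hrw]
  apply HasDerivAt.fun_sum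
  intro k _
  exact ((Real.hasStrictDerivAt_const_rpow (hM.eigenvalues_pos k) s).hasDerivAt.const_mul
    _).mul_const _

end auxstmt9

open auxstmt9 in
theorem stmt9 {n : ℕ} (A B : Matrix (Fin n) (Fin n) ℝ)
    (hA : A.PosDef) (hB : B.PosDef) :
    ∀ γ : ℝ → Matrix (Fin n) (Fin n) ℝ,
      γ = (fun s => matSqrt A * matFun (fun t => t ^ s) (matSqrtInv A * B * matSqrtInv A) * matSqrt A) →
      γ 0 = A ∧ γ 1 = B ∧
      ∃ D : ℝ → Matrix (Fin n) (Fin n) ℝ,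
        (∀ s ∈ Set.Icc (0 : ℝ) 1,
          (∀ i j, HasDerivAt (fun t => γ t i j) (D s i j) s) ∧
          hsNorm (matSqrtInv (γ s) * D s * matSqrtInv (γ s)) = pdist A B) ∧
        (∫ s in (0 : ℝ)..1, hsNorm (matSqrtInv (γ s) * D s * matSqrtInv (γ s))) = pdist A B := by
  intro γ hγ
  subst hγ
  set S := matSqrt A with hSdef
  set Si := matSqrtInv A with hSidef
  set M := Si * B * Si with hMdef
  -- basic facts
  have hS_herm : S.IsHermitian := matFun_isHermitian hA.1 _
  have hSi_herm : Si.IsHermitian := matFun_isHermitian hA.1 _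
  have hSi_pd : Si.PosDef :=
    matFun_posDef hA fun i => inv_pos.mpr (Real.sqrt_pos.mpr (hA.eigenvalues_pos i))
  have hS_pd : S.PosDef :=
    matFun_posDef hA fun i => Real.sqrt_pos.mpr (hA.eigenvalues_pos i)
  have hS_mul_S : S * S = A := by
    rw [hSdef, matSqrt, matFun_mul hA.1,
      matFun_congr hA.1 (g := fun t => t) (fun i => Real.mul_self_sqrt (hA.eigenvalues_pos i).le),
      matFun_id hA.1]
  have hSi_mul_S : Si * S = 1 := by
    rw [hSdef, hSidef, matSqrt, matSqrtInv, matFun_mul hA.1,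
      matFun_congr hA.1 (g := fun _ => 1) (fun i => inv_mul_cancel₀
        (Real.sqrt_pos.mpr (hA.eigenvalues_pos i)).ne'),
      matFun_one hA.1]
  have hS_mul_Si : S * Si = 1 := by
    rw [hSdef, hSidef, matSqrt, matSqrtInv, matFun_mul hA.1,
      matFun_congr hA.1 (g := fun _ => 1) (fun i => mul_inv_cancel₀
        (Real.sqrt_pos.mpr (hA.eigenvalues_pos i)).ne'),
      matFun_one hA.1]
  have hM : M.PosDef := by
    have : M = Siᴴ * B * Si := by rw [hSi_herm.eq]
    rw [this]
    exact posDef_conj hB (isUnit_iff_ne_zero.mpr hSi_pd.det_pos.ne')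
  have hMeig : ∀ i, 0 < hM.1.eigenvalues i := hM.eigenvalues_pos
  -- the candidate derivative
  set D : ℝ → Matrix (Fin n) (Fin n) ℝ :=
    fun s => S * matFun (fun t => t ^ s * Real.log t) M * S with hDdef
  set E : Matrix (Fin n) (Fin n) ℝ := matFun Real.log M with hEdef
  have hE_herm : E.IsHermitian := matFun_isHermitian hM.1 _
  -- gamma facts for each s
  have hγpd : ∀ s : ℝ, (S * matFun (fun t => t ^ s) M * S).PosDef := by
    intro s
    have hpos : (matFun (fun t => t ^ s) M).PosDef :=
      matFun_posDef hM fun i => Real.rpow_pos_of_pos (hMeig i) s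
    have : S * matFun (fun t => t ^ s) M * S = Sᴴ * matFun (fun t => t ^ s) M * S := by
      rw [hS_herm.eq]
    rw [this]
    exact posDef_conj hpos (isUnit_iff_ne_zero.mpr hS_pd.det_pos.ne')
  have hγinv : ∀ s : ℝ, (S * matFun (fun t => t ^ s) M * S)⁻¹ =
      Si * matFun (fun t => t ^ (-s)) M * Si := by
    intro s
    apply Matrix.inv_eq_right_inv
    have e1 : S * matFun (fun t => t ^ s) M * S * (Si * matFun (fun t => t ^ (-s)) M * Si) =
        S * (matFun (fun t => t ^ s) M * ((S * Si) * matFun (fun t => t ^ (-s)) M)) * Si := by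
      noncomm_ring
    rw [e1, hS_mul_Si, one_mul, matFun_mul hM.1,
      matFun_congr hM.1 (g := fun _ => 1) (fun i => by
        rw [← Real.rpow_add (hMeig i), add_neg_cancel, Real.rpow_zero]),
      matFun_one hM.1, mul_one, hS_mul_Si]
  -- the key norm identity, for every real s
  have normEq : ∀ s : ℝ,
      hsNorm (matSqrtInv (S * matFun (fun t => t ^ s) M * S) * D s *
        matSqrtInv (S * matFun (fun t => t ^ s) M * S)) = pdist A B := by
    intro s
    set G := S * matFun (fun t => t ^ s) M * S with hGdef
    set N := matSqrtInv G with hNdef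
    have hGpd : G.PosDef := hγpd s
    have hN_herm : N.IsHermitian := matFun_isHermitian hGpd.1 _
    have hNN : N * N = G⁻¹ := by
      rw [hNdef, matSqrtInv, matFun_mul hGpd.1,
        matFun_congr hGpd.1 (g := fun t => t⁻¹) (fun i => by
          rw [← mul_inv, Real.mul_self_sqrt (hGpd.eigenvalues_pos i).le]),
        ← matFun_inv hGpd]
    have hDherm : (D s).IsHermitian := by
      have := Matrix.isHermitian_conjTranspose_mul_mul S
        (matFun_isHermitian hM.1 (fun t => t ^ s * Real.log t))
      rwa [hS_herm.eq] at this
    have hCi : D s * G⁻¹ = S * E * Si := by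
      rw [hγinv s, hDdef]
      have e1 : S * matFun (fun t => t ^ s * Real.log t) M * S *
          (Si * matFun (fun t => t ^ (-s)) M * Si) =
          S * (matFun (fun t => t ^ s * Real.log t) M *
            ((S * Si) * matFun (fun t => t ^ (-s)) M)) * Si := by
        noncomm_ring
      rw [e1, hS_mul_Si, one_mul, matFun_mul hM.1,
        matFun_congr hM.1 (g := Real.log) (fun i => by
          have h0 : (hM.1.eigenvalues i) ^ s * (hM.1.eigenvalues i) ^ (-s) = 1 := by
            rw [← Real.rpow_add (hMeig i), add_neg_cancel, Real.rpow_zero]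
          calc hM.1.eigenvalues i ^ s * Real.log (hM.1.eigenvalues i) *
                hM.1.eigenvalues i ^ (-s)
              = (hM.1.eigenvalues i ^ s * hM.1.eigenvalues i ^ (-s)) *
                Real.log (hM.1.eigenvalues i) := by ring
            _ = Real.log (hM.1.eigenvalues i) := by rw [h0, one_mul]),
        hEdef]
    have htrace : ((N * D s * N)ᵀ * (N * D s * N)).trace = (E * E).trace := by
      have hsym : (N * D s * N)ᵀ = N * D s * N := by
        rw [Matrix.transpose_mul, Matrix.transpose_mul, herm_transpose hN_herm,
          herm_transpose hDherm]
        noncomm_ring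
      rw [hsym]
      have e2 : (N * D s * N) * (N * D s * N) = N * (D s * (N * N) * (D s * N)) := by
        noncomm_ring
      rw [e2, Matrix.trace_mul_comm]
      have e3 : D s * (N * N) * (D s * N) * N = (D s * (N * N)) * (D s * (N * N)) := by
        noncomm_ring
      rw [e3, hNN, hCi]
      have e4 : (S * E * Si) * (S * E * Si) = S * (E * (Si * S) * E) * Si := by noncomm_ring
      rw [e4, hSi_mul_S, mul_one, Matrix.trace_mul_cycle, ← Matrix.mul_assoc, hSi_mul_S, one_mul]
    have hpd : pdist A B = Real.sqrt ((E * E).trace) := by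
      rw [pdist, hsNorm, matLog, ← hMdef, ← hEdef, herm_transpose hE_herm]
    rw [hsNorm, htrace, hpd]
  -- derivative of entries
  have hDeriv : ∀ (s : ℝ) (i j : Fin n),
      HasDerivAt (fun t => (S * matFun (fun x => x ^ t) M * S) i j) (D s i j) s := by
    intro s i j
    have hrw2 : ∀ G : Matrix (Fin n) (Fin n) ℝ,
        (S * G * S) i j = ∑ q, (∑ p, S i p * G p q) * S q j := by
      intro G; simp [Matrix.mul_apply]
    have hDij : D s i j = ∑ q, (∑ p, S i p * matFun (fun x => x ^ s * Real.log x) M p q) * S q j :=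
      hrw2 _
    simp only [hrw2, hDij]
    apply HasDerivAt.fun_sum
    intro q _
    exact (HasDerivAt.fun_sum fun p _ =>
      ((hasDerivAt_matFun_entry hM s p q).const_mul (S i p))).mul_const _
  refine ⟨?_, ?_, D, fun s _ => ⟨hDeriv s, normEq s⟩, ?_⟩
  · show S * matFun (fun t => t ^ (0:ℝ)) M * S = A
    rw [matFun_congr hM.1 (g := fun _ => 1) (fun i => Real.rpow_zero _), matFun_one hM.1,
      mul_one, hS_mul_S]
  · show S * matFun (fun t => t ^ (1:ℝ)) M * S = B
    rw [matFun_congr hM.1 (g := fun t => t) (fun i => Real.rpow_one _), matFun_id hM.1, hMdef]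
    have : S * (Si * B * Si) * S = (S * Si) * B * (Si * S) := by noncomm_ring
    rw [this, hS_mul_Si, hSi_mul_S, one_mul, mul_one]
  · have : (fun s => hsNorm (matSqrtInv (S * matFun (fun t => t ^ s) M * S) * D s *
        matSqrtInv (S * matFun (fun t => t ^ s) M * S))) = fun _ => pdist A B :=
      funext normEq
    rw [this]
    simp
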